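/- Let p be a prime, k a field of characteristic p, G a topological group, and I an open subgroup of G which, with the subspace topology, is a pro-p profinite group. Let V be a smooth representation of G over k. If the fixed subspace V^I is finite-dimensional over k, then V is admissible, i.e., for every open subgroup J of G the fixed subspace V^J is finite-dimensional over k. -/

import Mathlib

section Defs

variable {k : Type*} [Field k] {G : Type*} [Group G] [TopologicalSpace G]
variable {V : Type*} [AddCommGroup V] [Module k V]

/-- A representation of a topological group is smooth if the stabilizer of every
vector is an open subset. -/
def IsSmoothRep (ρ : Representation k G V) : Prop :=
  ∀ v : V, IsOpen {g : G | ρ g v = v}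

/-- The subspace of vectors fixed by every element of a subset `S` of `G`. -/
def fixedBy (ρ : Representation k G V) (S : Set G) : Submodule k V where
  carrier := {v : V | ∀ g ∈ S, ρ g v = v}
  add_mem' := by intro a b ha hb g hg; simp [map_add, ha g hg, hb g hg]
  zero_mem' := by intro g hg; simp
  smul_mem' := by intro c a ha g hg; simp [ha g hg]

/-- A subspace is `G`-stable if it is preserved by the action. -/
def IsStableRep (ρ : Representation k G V) (W : Submodule k V) : Prop :=
  ∀ g : G, ∀ v ∈ W, ρ g v ∈ W

/-- A representation is irreducible if it is nonzero and its only `G`-stable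
subspaces are `⊥` and `⊤`. -/
def IsIrreducibleRep (ρ : Representation k G V) : Prop :=
  (∃ v : V, v ≠ 0) ∧ ∀ W : Submodule k V, IsStableRep ρ W → W = ⊥ ∨ W = ⊤

/-- A representation is admissible if it is smooth and its fixed vectors under every
open subgroup form a finite-dimensional space. -/
def IsAdmissibleRep (ρ : Representation k G V) : Prop :=
  IsSmoothRep ρ ∧
    ∀ J : Subgroup G, IsOpen (J : Set G) → FiniteDimensional k ↥(fixedBy ρ (J : Set G))

/-- A (profinite) topological group is pro-`p` if every open normal subgroup has
index a power of `p`. -/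
def IsProP (p : ℕ) (G : Type*) [Group G] [TopologicalSpace G] : Prop :=
  ∀ N : Subgroup G, N.Normal → IsOpen (N : Set G) → ∃ n : ℕ, N.index = p ^ n

end Defs


section AuxLemmas

variable {k : Type*} [Field k]

/-- Extension lemma: if a linear map has finite-dimensional kernel and finite-dimensional
codomain, its domain is finite-dimensional. -/
lemma aux_fd_of_ker {A B : Type*} [AddCommGroup A] [Module k A] [AddCommGroup B] [Module k B]
    (φ : A →ₗ[k] B) [FiniteDimensional k B]
    (h : FiniteDimensional k (LinearMap.ker φ)) : FiniteDimensional k A := by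
  have h1 : ((⊤ : Submodule k A).map φ).FG := IsNoetherian.noetherian _
  have h2 : ((⊤ : Submodule k A) ⊓ LinearMap.ker φ).FG := by
    rw [top_inf_eq]
    exact Module.Finite.iff_fg.mp h
  exact Module.finite_def.mpr (Submodule.fg_of_fg_map_of_fg_inf_ker φ h1 h2)

/-- If `f` preserves `U`, is nilpotent of order `m` on `U`, and `U ∩ ker f` is
finite-dimensional, then `U` is finite-dimensional. -/
lemma aux_nil {V : Type*} [AddCommGroup V] [Module k V]
    (f : Module.End k V) (U : Submodule k V) (hUstab : ∀ u ∈ U, f u ∈ U)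
    (hker : FiniteDimensional k ↥(U ⊓ LinearMap.ker f)) (m : ℕ)
    (hnil : ∀ u ∈ U, (f ^ m) u = 0) : FiniteDimensional k ↥U := by
  have key : ∀ i, FiniteDimensional k ↥(U ⊓ LinearMap.ker (f ^ i)) := by
    intro i
    induction i with
    | zero =>
      have h0 : U ⊓ LinearMap.ker (f ^ 0) = ⊥ := by
        rw [pow_zero]
        simp [Module.End.one_eq_id, LinearMap.ker_id]
      rw [h0]
      infer_instance
    | succ i ih =>
      have hmap : ∀ u ∈ (U ⊓ LinearMap.ker (f ^ (i + 1)) : Submodule k V),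
          f u ∈ (U ⊓ LinearMap.ker (f ^ i) : Submodule k V) := by
        rintro u ⟨hu, hku⟩
        refine ⟨hUstab u hu, ?_⟩
        have hps : (f ^ i) (f u) = (f ^ (i + 1)) u := by
          rw [pow_succ]; rfl
        show f u ∈ LinearMap.ker (f ^ i)
        rw [LinearMap.mem_ker, hps]
        exact hku
      set φ := f.restrict hmap with hφ
      have hkφ : FiniteDimensional k ↥(LinearMap.ker φ) := by
        have hker_le : ∀ x : ↥(LinearMap.ker φ),
            ((x : ↥(U ⊓ LinearMap.ker (f ^ (i + 1)))) : V) ∈ U ⊓ LinearMap.ker f := by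
          rintro ⟨⟨u, hu⟩, hx⟩
          refine ⟨hu.1, ?_⟩
          have := congrArg Subtype.val hx
          simpa [hφ, LinearMap.restrict_apply] using this
        let ψ : ↥(LinearMap.ker φ) →ₗ[k] ↥(U ⊓ LinearMap.ker f) :=
          { toFun := fun x => ⟨x.1.1, hker_le x⟩
            map_add' := fun x y => rfl
            map_smul' := fun c x => rfl }
        have hinj : Function.Injective ψ := by
          intro x y hxy
          have h' := Subtype.ext_iff.mp hxy
          exact Subtype.ext (Subtype.ext h')
        exact FiniteDimensional.of_injective ψ hinj
      exact aux_fd_of_ker φ hkφ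
  have hUeq : U ⊓ LinearMap.ker (f ^ m) = U :=
    inf_eq_left.mpr (fun u hu => LinearMap.mem_ker.mpr (hnil u hu))
  rw [← hUeq]
  exact key m

end AuxLemmas



section AuxGroup

/-- The stabilizer of a vector is a subgroup. -/
def auxStab {k : Type*} [Field k] {G : Type*} [Group G] {V : Type*} [AddCommGroup V]
    [Module k V] (ρ : Representation k G V) (v : V) : Subgroup G where
  carrier := {g | ρ g v = v}
  one_mem' := by simp
  mul_mem' := by
    intro a b ha hb
    simp only [Set.mem_setOf_eq] at *
    rw [map_mul, Module.End.mul_apply, hb, ha]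
  inv_mem' := by
    intro a ha
    simp only [Set.mem_setOf_eq] at *
    calc ρ a⁻¹ v = ρ a⁻¹ (ρ a v) := by rw [ha]
    _ = (ρ a⁻¹ * ρ a) v := rfl
    _ = ρ (a⁻¹ * a) v := by rw [map_mul]
    _ = v := by simp

lemma aux_normal_of_le_center {H : Type*} [Group H] {K : Subgroup H}
    (h : K ≤ Subgroup.center H) : K.Normal := by
  constructor
  intro n hn g
  have hc := Subgroup.mem_center_iff.mp (h hn)
  have : g * n * g⁻¹ = n := by rw [hc g]; group
  rw [this]
  exact hn

lemma aux_induct (p : ℕ) (hp : p.Prime) {k : Type*} [Field k] [CharP k p]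
    {G : Type*} [Group G] (I : Subgroup G)
    {V : Type*} [AddCommGroup V] [Module k V] [Nontrivial V]
    (ρ : Representation k G V)
    (hfix : FiniteDimensional k ↥(fixedBy ρ (I : Set G))) (n : ℕ) :
    ∀ N : Subgroup ↥I, N.Normal → N.index = p ^ n →
      FiniteDimensional k ↥(fixedBy ρ ((N.map I.subtype : Subgroup G) : Set G)) := by
  haveI : Fact p.Prime := ⟨hp⟩
  induction n with
  | zero =>
    intro N hN hidx
    have hNtop : N = ⊤ := Subgroup.index_eq_one.mp (by simpa using hidx)
    subst hNtop
    have htop : ((⊤ : Subgroup ↥I).map I.subtype) = I := by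
      rw [← MonoidHom.range_eq_map, Subgroup.range_subtype]
    rw [htop]
    exact hfix
  | succ n ih =>
    intro N hN hidx
    haveI : N.FiniteIndex := ⟨by rw [hidx]; exact pow_ne_zero _ hp.ne_zero⟩
    have hcard : Nat.card (↥I ⧸ N) = p ^ (n + 1) := by
      rw [← Subgroup.index_eq_card]; exact hidx
    have hpQ : IsPGroup p (↥I ⧸ N) := IsPGroup.of_card hcard
    haveI : Nontrivial (↥I ⧸ N) := by
      have h1 : 1 < Nat.card (↥I ⧸ N) := by
        rw [hcard]; exact Nat.one_lt_pow n.succ_ne_zero hp.one_lt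
      exact Finite.one_lt_card_iff_nontrivial.mp h1
    haveI := hpQ.center_nontrivial
    obtain ⟨⟨z, hzc⟩, hz1⟩ := exists_ne (1 : ↥(Subgroup.center (↥I ⧸ N)))
    have hz1' : z ≠ 1 := by simpa [Subtype.ext_iff] using hz1
    obtain ⟨j, hj⟩ := hpQ z
    obtain ⟨m, _, hm⟩ := (Nat.dvd_prime_pow hp).mp (orderOf_dvd_of_pow_eq_one hj)
    have hm0 : m ≠ 0 := by
      intro h; rw [h, pow_zero] at hm; exact hz1' (orderOf_eq_one_iff.mp hm)
    set z' := z ^ (p ^ (m - 1)) with hz'def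
    have hz'p : z' ^ p = 1 := by
      have hm1 : p ^ (m - 1) * p = p ^ m := by
        rw [← pow_succ]
        congr 1
        omega
      rw [hz'def, ← pow_mul, hm1, ← hm]
      exact pow_orderOf_eq_one z
    have hz'1 : z' ≠ 1 := by
      intro h
      have hdvd : orderOf z ∣ p ^ (m - 1) := orderOf_dvd_of_pow_eq_one h
      rw [hm] at hdvd
      exact absurd (Nat.le_of_dvd (pow_pos hp.pos _) hdvd)
        (not_le.mpr (Nat.pow_lt_pow_right hp.one_lt (Nat.sub_lt (Nat.pos_of_ne_zero hm0)
          one_pos)))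
    have hz'c : z' ∈ Subgroup.center (↥I ⧸ N) := pow_mem hzc _
    have hordz' : orderOf z' = p := orderOf_eq_prime hz'p hz'1
    set Z : Subgroup ↥I := (Subgroup.zpowers z').comap (QuotientGroup.mk' N) with hZdef
    have hZnormal : Z.Normal := by
      have hzn : (Subgroup.zpowers z').Normal :=
        aux_normal_of_le_center (Subgroup.zpowers_le.mpr hz'c)
      exact hzn.comap _
    have hZidx : Z.index = p ^ n := by
      have h1 : Z.index = (Subgroup.zpowers z').index :=
        Subgroup.index_comap_of_surjective _ (QuotientGroup.mk'_surjective N)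
      have h2 : Nat.card (Subgroup.zpowers z') * (Subgroup.zpowers z').index = p ^ (n + 1) := by
        rw [Subgroup.card_mul_index, hcard]
      rw [Nat.card_zpowers, hordz', pow_succ'] at h2
      rw [h1]
      exact Nat.eq_of_mul_eq_mul_left hp.pos h2
    haveI hZfd := ih Z hZnormal hZidx
    obtain ⟨g, hg⟩ := QuotientGroup.mk'_surjective N z'
    have hgpN : (g : ↥I) ^ p ∈ N := by
      have h1 : ((g ^ p : ↥I) : ↥I ⧸ N) = 1 := by
        have : QuotientGroup.mk' N (g ^ p) = 1 := by rw [map_pow, hg, hz'p]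
        exact this
      exact (QuotientGroup.eq_one_iff _).mp h1
    set N' := N.map I.subtype with hN'def
    set U := fixedBy ρ (N' : Set G) with hUdef
    have hstab : ∀ u ∈ U, (ρ (g : G)) u ∈ U := by
      intro u hu x hx
      obtain ⟨y, hy, rfl⟩ := hx
      have hconj : (g⁻¹ * y * g : ↥I) ∈ N := by
        have := hN.conj_mem y hy g⁻¹
        simpa using this
      have hmem : (((g⁻¹ * y * g : ↥I) : G)) ∈ (N' : Set G) := ⟨_, hconj, rfl⟩
      calc ρ (I.subtype y) (ρ (↑g) u) = (ρ ((y : G)) * ρ ((g : G))) u := rfl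
      _ = ρ ((y : G) * (g : G)) u := by rw [map_mul]
      _ = ρ ((g : G) * ((g⁻¹ * y * g : ↥I) : G)) u := by
          congr 1
          push_cast
          group
      _ = (ρ ((g : G)) * ρ (((g⁻¹ * y * g : ↥I) : G))) u := by rw [map_mul]
      _ = ρ ((g : G)) (ρ (((g⁻¹ * y * g : ↥I) : G)) u) := rfl
      _ = ρ ((g : G)) u := by rw [hu _ hmem]
    obtain ⟨v0, hv0⟩ := exists_ne (0 : V)
    haveI : Nontrivial (Module.End k V) := by
      refine ⟨1, 0, fun h => hv0 ?_⟩
      have := DFunLike.congr_fun h v0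
      simpa using this
    haveI : CharP (Module.End k V) p := charP_of_injective_algebraMap' (A := Module.End k V) k p
    set f : Module.End k V := ρ (g : G) - 1 with hfdef
    have hfp : ∀ u ∈ U, (f ^ p) u = 0 := by
      intro u hu
      have hfpow : f ^ p = ρ ((g : G) ^ p) - 1 := by
        rw [hfdef, sub_pow_char_of_commute p (Commute.one_right _), one_pow, map_pow]
      have hmem : ((g : G)) ^ p ∈ (N' : Set G) := by
        refine ⟨g ^ p, hgpN, ?_⟩
        push_cast
        rfl
      rw [hfpow, LinearMap.sub_apply, hu _ hmem]
      simp
    have hker_fd : FiniteDimensional k ↥(U ⊓ LinearMap.ker f) := by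
      have hle : U ⊓ LinearMap.ker f ≤ fixedBy ρ ((Z.map I.subtype : Subgroup G) : Set G) := by
        rintro u ⟨hu, hku⟩
        have hgu : ρ (g : G) u = u := by
          have h0 : f u = 0 := hku
          rw [hfdef] at h0
          simpa [sub_eq_zero] using h0
        have hZle : Z ≤ N ⊔ Subgroup.zpowers g := by
          intro y hy
          obtain ⟨mz, hmz⟩ := hy
          have hw : (y * (g ^ mz)⁻¹ : ↥I) ∈ N := by
            have h1 : ((y * (g ^ mz)⁻¹ : ↥I) : ↥I ⧸ N) = 1 := by
              have : QuotientGroup.mk' N (y * (g ^ mz)⁻¹) = 1 := by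
                rw [map_mul, map_inv, map_zpow, hg, ← hmz]
                group
              exact this
            exact (QuotientGroup.eq_one_iff _).mp h1
          have hyeq : y = (y * (g ^ mz)⁻¹) * g ^ mz := by group
          rw [hyeq]
          exact Subgroup.mul_mem_sup hw (Subgroup.zpow_mem_zpowers g mz)
        have hmap_le : Z.map I.subtype ≤ N' ⊔ Subgroup.zpowers (g : G) := by
          calc Z.map I.subtype ≤ (N ⊔ Subgroup.zpowers g).map I.subtype :=
              Subgroup.map_mono hZle
          _ = N' ⊔ (Subgroup.zpowers g).map I.subtype := by rw [Subgroup.map_sup]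
          _ = N' ⊔ Subgroup.zpowers (g : G) := by rw [MonoidHom.map_zpowers]; rfl
        have hsub_le : N' ⊔ Subgroup.zpowers ((g : G)) ≤ auxStab ρ u :=
          sup_le (fun a ha => hu a ha) (Subgroup.zpowers_le.mpr hgu)
        intro x hx
        exact hsub_le (hmap_le hx)
      exact Submodule.finiteDimensional_of_le hle
    have hstab' : ∀ u ∈ U, f u ∈ U := by
      intro u hu
      have h1 : f u = ρ (g : G) u - u := by simp [hfdef]
      rw [h1]
      exact U.sub_mem (hstab u hu) hu
    exact aux_nil f U hstab' hker_fd p hfp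

end AuxGroup

/-- if a smooth representation has finite-dimensional fixed vectors under
one open pro-`p` profinite subgroup `I`, then it is admissible: the fixed vectors under
every open subgroup form a finite-dimensional subspace. -/
theorem statement3 (p : ℕ) (hp : p.Prime)
    {k : Type*} [Field k] [CharP k p]
    {G : Type*} [Group G] [TopologicalSpace G] [IsTopologicalGroup G]
    (I : Subgroup G) (hIopen : IsOpen (I : Set G))
    [CompactSpace ↥I] [T2Space ↥I] [TotallyDisconnectedSpace ↥I]
    (hpro : IsProP p ↥I)
    {V : Type*} [AddCommGroup V] [Module k V]
    (ρ : Representation k G V) (hsm : IsSmoothRep ρ)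
    (hfix : FiniteDimensional k ↥(fixedBy ρ (I : Set G))) :
    ∀ J : Subgroup G, IsOpen (J : Set G) → FiniteDimensional k ↥(fixedBy ρ (J : Set G)) := by
  intro J hJopen
  rcases subsingleton_or_nontrivial V with hV | hV
  · infer_instance
  · have hKopen : IsOpen ((J.subgroupOf I : Subgroup ↥I) : Set ↥I) :=
      Subgroup.subgroupOf_isOpen I J hJopen
    haveI : Finite (↥I ⧸ J.subgroupOf I) :=
      Subgroup.quotient_finite_of_isOpen _ hKopen
    haveI : (J.subgroupOf I).FiniteIndex := Subgroup.finiteIndex_of_finite_quotient (H := J.subgroupOf I)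
    set N : Subgroup ↥I := (J.subgroupOf I).normalCore with hNdef
    haveI : N.FiniteIndex := Subgroup.finiteIndex_normalCore _
    have hNopen : IsOpen (N : Set ↥I) :=
      Subgroup.isOpen_of_isClosed_of_finiteIndex _
        (Subgroup.normalCore_isClosed _ (Subgroup.isClosed_of_isOpen _ hKopen))
    obtain ⟨n, hn⟩ := hpro N (Subgroup.normalCore_normal _) hNopen
    haveI hfd := aux_induct p hp I ρ hfix n N (Subgroup.normalCore_normal _) hn
    have hle : (N.map I.subtype : Subgroup G) ≤ J := by
      calc N.map I.subtype ≤ (J.subgroupOf I).map I.subtype :=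
          Subgroup.map_mono (Subgroup.normalCore_le _)
      _ = J ⊓ I := Subgroup.subgroupOf_map_subtype J I
      _ ≤ J := inf_le_left
    have hmono : fixedBy ρ (J : Set G) ≤ fixedBy ρ ((N.map I.subtype : Subgroup G) : Set G) :=
      fun v hv x hx => hv x (hle hx)
    exact Submodule.finiteDimensional_of_le hmono
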